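/- arXiv:1808.00458 — 2 statements merged into one kernel-verified Lean document; each statement's English description precedes it below -/
import Mathlib

section
/- In the triangular mesh for N modes, for every MZI at position (n, ℓ), the number of reachable inputs |I_{nℓ}| plus the number of reachable outputs |O_{nℓ}| plus n equals 2N + 1; equivalently the sensitivity index satisfies N − n = |I_{nℓ}| + |O_{nℓ}| − N − 1. -/
/-- A mesh is a set of MZI nodes `(n, ℓ)`: the node couples waveguides `n` and
`n+1` in vertical layer `ℓ`. -/
abbrev Mesh := Set (ℕ × ℕ)

/-- One layer of propagation: light on waveguide `a` before layer `j` can reach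
waveguide `b` after layer `j` iff it stays put or passes through an MZI of
layer `j` coupling the two waveguides. -/
def stepRel (S : Mesh) (j a b : ℕ) : Prop :=
  a = b ∨ ∃ p, (p, j) ∈ S ∧ (a = p ∨ a = p + 1) ∧ (b = p ∨ b = p + 1)

/-- Light entering at input port `m` can reach the MZI at `(n, ℓ)`. -/
def reachesNode (S : Mesh) (n ℓ m : ℕ) : Prop :=
  ∃ w : ℕ → ℕ, w 0 = m ∧ (∀ j, j + 1 < ℓ → stepRel S (j + 1) (w j) (w (j + 1))) ∧
    (w (ℓ - 1) = n ∨ w (ℓ - 1) = n + 1)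

/-- Light exiting the MZI at `(n, ℓ)` can reach output port `q` of a mesh with
`L` vertical layers. -/
def nodeReaches (S : Mesh) (L n ℓ q : ℕ) : Prop :=
  ∃ w : ℕ → ℕ, (w ℓ = n ∨ w ℓ = n + 1) ∧
    (∀ j, ℓ < j → j ≤ L → stepRel S j (w (j - 1)) (w j)) ∧ w L = q

/-- The set of reachable input ports `I_{nℓ}` (waveguides are numbered `1..N`). -/
def reachableInputs (S : Mesh) (N n ℓ : ℕ) : Set ℕ :=
  {m | 1 ≤ m ∧ m ≤ N ∧ reachesNode S n ℓ m}

/-- The set of reachable output ports `O_{nℓ}` of a mesh with `L` layers. -/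
def reachableOutputs (S : Mesh) (N L n ℓ : ℕ) : Set ℕ :=
  {q | 1 ≤ q ∧ q ≤ N ∧ nodeReaches S L n ℓ q}

/-- The Reck triangular mesh on `N` waveguides, with `2N - 3` vertical layers:
an MZI sits at `(n, ℓ)` iff `1 ≤ n ≤ N - 1`, `N - n ≤ ℓ ≤ N - 2 + n`, and
`n + ℓ ≡ N (mod 2)`. -/
def triangularMesh (N : ℕ) : Mesh :=
  {p | 1 ≤ p.1 ∧ p.1 ≤ N - 1 ∧ N - p.1 ≤ p.2 ∧ p.2 ≤ N - 2 + p.1 ∧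
    (p.1 + p.2) % 2 = N % 2}

lemma tri_mem {N p j : ℕ} (h : (p, j) ∈ triangularMesh N) :
    1 ≤ p ∧ p + 1 ≤ N ∧ N ≤ j + p ∧ j + 2 ≤ N + p ∧ (p + j) % 2 = N % 2 := by
  obtain ⟨h1, h2, h3, h4, h5⟩ := h
  exact ⟨h1, by omega, by omega, by omega, h5⟩

lemma tri_mem_intro {N p j : ℕ} (h1 : 1 ≤ p) (h2 : p + 1 ≤ N) (h3 : N ≤ j + p)
    (h4 : j + 2 ≤ N + p) (h5 : (p + j) % 2 = N % 2) : (p, j) ∈ triangularMesh N :=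
  ⟨h1, by omega, by omega, by omega, h5⟩

/-- Inputs: lower bound. If `m` reaches node `(n,ℓ)` then `n + N ≤ 2m + ℓ`. -/
lemma input_lb {N n ℓ m : ℕ} (hn2 : n + 1 ≤ N) (hl1 : N ≤ ℓ + n)
    (hr : reachesNode (triangularMesh N) n ℓ m) : n + N ≤ 2 * m + ℓ := by
  obtain ⟨w, hw0, hstep, hend⟩ := hr
  have hl : 1 ≤ ℓ := by omega
  have inv : ∀ j, j + 1 ≤ ℓ → w j ≤ m ∨ w j + N ≤ 2 * m + j + 1 := by
    intro j
    induction j with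
    | zero => intro _; left; omega
    | succ j ih =>
      intro hj
      have h1 := ih (by omega)
      have h2 := hstep j (by omega)
      rcases h2 with heq | ⟨p, hp, ha, hb⟩
      · omega
      · obtain ⟨c1, c2, c3, c4, c5⟩ := tri_mem hp
        rcases ha with ha | ha <;> rcases hb with hb | hb <;> omega
  have := inv (ℓ - 1) (by omega)
  omega

/-- Outputs: lower bound. -/
lemma output_lb {N n ℓ q : ℕ} (hN : 2 ≤ N) (hn2 : n + 1 ≤ N) (hl2 : ℓ + 2 ≤ N + n)
    (hr : nodeReaches (triangularMesh N) (2 * N - 3) n ℓ q) :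
    n + ℓ + 2 ≤ 2 * q + N := by
  obtain ⟨w, hwl, hstep, hwL⟩ := hr
  rcases le_or_gt (2 * N - 3) ℓ with hL | hL
  · have hLe : ℓ = 2 * N - 3 := by omega
    have hq : w ℓ = q := by rw [hLe]; exact hwL
    rcases hwl with h | h <;> omega
  · have inv : ∀ j, ℓ ≤ j → j ≤ 2 * N - 3 →
        n + ℓ + 2 ≤ 2 * w j + N ∧ n + ℓ ≤ w j + j := by
      intro j hj
      induction j, hj using Nat.le_induction with
      | base => intro _; rcases hwl with h | h <;> omega
      | succ j hj ih =>
        intro hjL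
        have h1 := ih (by omega)
        have h2 := hstep (j + 1) (by omega) hjL
        rw [Nat.add_sub_cancel] at h2
        rcases h2 with heq | ⟨p, hp, ha, hb⟩
        · omega
        · obtain ⟨c1, c2, c3, c4, c5⟩ := tri_mem hp
          rcases ha with ha | ha <;> rcases hb with hb | hb <;> omega
    have := inv (2 * N - 3) (by omega) le_rfl
    omega

/-- Inputs: construction. -/
lemma input_reach {N n ℓ m : ℕ} (hn1 : 1 ≤ n) (hn2 : n + 1 ≤ N)
    (hl1 : N ≤ ℓ + n) (hl2 : ℓ + 2 ≤ N + n) (hpar : (n + ℓ) % 2 = N % 2)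
    (hm1 : 1 ≤ m) (hmN : m ≤ N) (hkey : n + N ≤ 2 * m + ℓ) :
    reachesNode (triangularMesh N) n ℓ m := by
  rcases le_or_gt m n with hc | hc
  · -- ascend : increase at layers j1..ℓ-1, j1 = m + ℓ - n
    refine ⟨fun j => min n (m + (j + 1 - (m + ℓ - n))), ?_, ?_, Or.inl ?_⟩
    · simp only; omega
    · intro j hj
      by_cases heq : min n (m + (j + 1 - (m + ℓ - n)))
          = min n (m + (j + 2 - (m + ℓ - n)))
      · left; simp only; omega
      · right
        refine ⟨m + (j + 1 - (m + ℓ - n)),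
          tri_mem_intro (by omega) (by omega) (by omega) (by omega) (by omega),
          Or.inl (by simp only; omega), Or.inr (by simp only; omega)⟩
    · simp only; omega
  · -- descend : decrease at layers j0+1..ℓ-1, j0 = ℓ + n - m
    refine ⟨fun j => max (n + 1) (m - (j - (ℓ + n - m))), ?_, ?_, Or.inr ?_⟩
    · simp only; omega
    · intro j hj
      by_cases heq : max (n + 1) (m - (j - (ℓ + n - m)))
          = max (n + 1) (m - (j + 1 - (ℓ + n - m)))
      · left; simp only; omega
      · right
        refine ⟨m - (j + 1 - (ℓ + n - m)),
          tri_mem_intro (by omega) (by omega) (by omega) (by omega) (by omega),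
          Or.inr (by simp only; omega), Or.inl (by simp only; omega)⟩
    · simp only; omega

/-- Outputs: construction. -/
lemma output_reach {N n ℓ q : ℕ} (hn1 : 1 ≤ n) (hn2 : n + 1 ≤ N)
    (hl1 : N ≤ ℓ + n) (hl2 : ℓ + 2 ≤ N + n) (hpar : (n + ℓ) % 2 = N % 2)
    (hq1 : 1 ≤ q) (hqN : q ≤ N) (hkey : n + ℓ + 2 ≤ 2 * q + N) :
    nodeReaches (triangularMesh N) (2 * N - 3) n ℓ q := by
  rcases le_or_gt q n with hc | hc
  · -- descend from n
    refine ⟨fun j => max q (n - (j - ℓ)), Or.inl (by simp only; omega), ?_,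
      by simp only; omega⟩
    intro j hj hjL
    by_cases heq : max q (n - (j - 1 - ℓ)) = max q (n - (j - ℓ))
    · left; simp only; omega
    · right
      refine ⟨n - (j - ℓ),
        tri_mem_intro (by omega) (by omega) (by omega) (by omega) (by omega),
        Or.inr (by simp only; omega), Or.inl (by simp only; omega)⟩
  · -- ascend from n+1
    refine ⟨fun j => min q (n + 1 + (j - ℓ)), Or.inr (by simp only; omega), ?_,
      by simp only; omega⟩
    intro j hj hjL
    by_cases heq : min q (n + 1 + (j - 1 - ℓ)) = min q (n + 1 + (j - ℓ))
    · left; simp only; omega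
    · right
      refine ⟨n + 1 + (j - 1 - ℓ),
        tri_mem_intro (by omega) (by omega) (by omega) (by omega) (by omega),
        Or.inl (by simp only; omega), Or.inr (by simp only; omega)⟩

theorem triangular_sensitivity_index (N n ℓ : ℕ) (hN : 2 ≤ N)
    (h : (n, ℓ) ∈ triangularMesh N) :
    (reachableInputs (triangularMesh N) N n ℓ).ncard
      + (reachableOutputs (triangularMesh N) N (2 * N - 3) n ℓ).ncard
      + n = 2 * N + 1 := by
  obtain ⟨hn1, hn2, hl1, hl2, hpar⟩ := tri_mem h
  obtain ⟨k1, hk1⟩ : ∃ k, ℓ + n = N + 2 * k := ⟨(ℓ + n - N) / 2, by omega⟩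
  obtain ⟨k2, hk2⟩ : ∃ k, N + n = ℓ + 2 + 2 * k := ⟨(N + n - ℓ - 2) / 2, by omega⟩
  have hI : reachableInputs (triangularMesh N) N n ℓ = Set.Icc (n - k1) N := by
    ext m
    simp only [reachableInputs, Set.mem_setOf_eq, Set.mem_Icc]
    constructor
    · rintro ⟨h1, h2, h3⟩
      have := input_lb hn2 hl1 h3
      omega
    · rintro ⟨h1, h2⟩
      exact ⟨by omega, h2, input_reach hn1 hn2 hl1 hl2 hpar (by omega) h2 (by omega)⟩
  have hO : reachableOutputs (triangularMesh N) N (2 * N - 3) n ℓ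
      = Set.Icc (n - k2) N := by
    ext q
    simp only [reachableOutputs, Set.mem_setOf_eq, Set.mem_Icc]
    constructor
    · rintro ⟨h1, h2, h3⟩
      have := output_lb hN hn2 hl2 h3
      omega
    · rintro ⟨h1, h2⟩
      exact ⟨by omega, h2, output_reach hn1 hn2 hl1 hl2 hpar (by omega) h2 (by omega)⟩
  rw [hI, hO, ← Finset.coe_Icc, Set.ncard_coe_finset, Nat.card_Icc,
    ← Finset.coe_Icc, Set.ncard_coe_finset, Nat.card_Icc]
  omega
end

section
/- In the rectangular (Clements) mesh on N waveguides, define d(x) = 2x−1 for x ≤ ⌊N/2⌋ and d(x) = 2(N−x) for x > ⌊N/2⌋, and s_x[y] = 2(⌊N/2⌋−y)+1 for y ≤ ⌊N/2⌋ and s_x[y] = 2(y−⌊N/2⌋) for y > ⌊N/2⌋, in diagonal coordinates (x,y) = ((n+ℓ)/2, (ℓ−n)/2 + ⌊N/2⌋). Then the sensitivity index α = d(x) + 1 − s_x[y] equals |I| + |O| − N − 1, where |I| and |O| are the numbers of reachable input and output ports of the MZI at (n,ℓ). -/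
/-- The Clements rectangular mesh on `N` waveguides with `N` vertical layers:
an MZI sits at `(n, ℓ)` iff `1 ≤ n ≤ N - 1`, `1 ≤ ℓ ≤ N` and `n ≡ ℓ (mod 2)`. -/
def rectangularMesh (N : ℕ) : Mesh :=
  {p | 1 ≤ p.1 ∧ p.1 ≤ N - 1 ∧ 1 ≤ p.2 ∧ p.2 ≤ N ∧ p.1 % 2 = p.2 % 2}

/-- Length `d(x)` of the diagonal of constant `n + ℓ` at diagonal coordinate `x`. -/
def dDiag (N : ℕ) (x : ℤ) : ℤ :=
  if x ≤ (N / 2 : ℕ) then 2 * x - 1 else 2 * ((N : ℤ) - x)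

/-- The Clements enumeration sequence `s_x[y]`, which depends only on `y`. -/
def sSeq (N : ℕ) (y : ℤ) : ℤ :=
  if y ≤ (N / 2 : ℕ) then 2 * ((N / 2 : ℕ) - y) + 1 else 2 * (y - (N / 2 : ℕ))

lemma stepRel_dist {S : Mesh} {j a b : ℕ} (h : stepRel S j a b) :
    a ≤ b + 1 ∧ b ≤ a + 1 := by
  rcases h with rfl | ⟨p, _, hp, hq⟩
  · omega
  · omega

lemma walk_dist {S : Mesh} {w : ℕ → ℕ} {ℓ : ℕ}
    (hw : ∀ j, j + 1 < ℓ → stepRel S (j + 1) (w j) (w (j + 1))) :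
    ∀ j, j < ℓ → w j ≤ w 0 + j ∧ w 0 ≤ w j + j := by
  intro j
  induction j with
  | zero => intro; omega
  | succ k ih =>
      intro hk
      have h1 := ih (by beta_reduce; omega)
      have h2 := stepRel_dist (hw k (by beta_reduce; omega))
      omega

lemma walk_dist' {S : Mesh} {w : ℕ → ℕ} {ℓ L : ℕ}
    (hw : ∀ j, ℓ < j → j ≤ L → stepRel S j (w (j - 1)) (w j)) :
    ∀ j, ℓ ≤ j → j ≤ L → w j ≤ w ℓ + (j - ℓ) ∧ w ℓ ≤ w j + (j - ℓ) := by
  intro j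
  induction j with
  | zero =>
      intro h1 h2
      have : ℓ = 0 := by beta_reduce; omega
      subst this
      omega
  | succ k ih =>
      intro h1 h2
      by_cases hk : ℓ ≤ k
      · have ha := ih hk (by beta_reduce; omega)
        have hb := stepRel_dist (hw (k + 1) (by beta_reduce; omega) (by beta_reduce; omega))
        simp only [Nat.add_sub_cancel] at hb
        omega
      · have : ℓ = k + 1 := by beta_reduce; omega
        subst this
        omega

lemma reaches_of_le {N n ℓ m : ℕ} (h : (n, ℓ) ∈ rectangularMesh N)
    (h1 : 1 ≤ m) (h2 : m ≤ n + 1) (h3 : n + 1 ≤ m + ℓ) :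
    reachesNode (rectangularMesh N) n ℓ m := by
  obtain ⟨hn1, hn2, hl1, hl2, hpar⟩ := h
  simp only at hn1 hn2 hl1 hl2 hpar
  refine ⟨fun j => min (m + (j - (m + 1) % 2)) (max m n), by beta_reduce; omega, ?_, by beta_reduce; omega⟩
  intro j hj
  rcases eq_or_ne (min (m + (j - (m + 1) % 2)) (max m n))
      (min (m + (j + 1 - (m + 1) % 2)) (max m n)) with he | he
  · exact Or.inl he
  · refine Or.inr ⟨min (m + (j - (m + 1) % 2)) (max m n),
      ⟨by beta_reduce; omega, by beta_reduce; omega, by beta_reduce; omega, by beta_reduce; omega, by beta_reduce; omega⟩, Or.inl rfl, Or.inr (by beta_reduce; omega)⟩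

lemma reaches_of_ge {N n ℓ m : ℕ} (h : (n, ℓ) ∈ rectangularMesh N)
    (h1 : m ≤ N) (h2 : n ≤ m) (h3 : m ≤ n + ℓ) :
    reachesNode (rectangularMesh N) n ℓ m := by
  obtain ⟨hn1, hn2, hl1, hl2, hpar⟩ := h
  simp only at hn1 hn2 hl1 hl2 hpar
  refine ⟨fun j => max (m - (j - m % 2)) (min m (n + 1)), by beta_reduce; omega, ?_, by beta_reduce; omega⟩
  intro j hj
  rcases eq_or_ne (max (m - (j - m % 2)) (min m (n + 1)))
      (max (m - (j + 1 - m % 2)) (min m (n + 1))) with he | he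
  · exact Or.inl he
  · refine Or.inr ⟨max (m - (j + 1 - m % 2)) (min m (n + 1)),
      ⟨by beta_reduce; omega, by beta_reduce; omega, by beta_reduce; omega, by beta_reduce; omega, by beta_reduce; omega⟩, Or.inr (by beta_reduce; omega), Or.inl rfl⟩

lemma nodeReaches_of_ge {N n ℓ q : ℕ} (h : (n, ℓ) ∈ rectangularMesh N)
    (h1 : n + 1 ≤ q) (h2 : q ≤ N) (h3 : q + ℓ ≤ n + 1 + N) :
    nodeReaches (rectangularMesh N) N n ℓ q := by
  obtain ⟨hn1, hn2, hl1, hl2, hpar⟩ := h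
  simp only at hn1 hn2 hl1 hl2 hpar
  refine ⟨fun j => min (n + 1 + (j - ℓ)) q, Or.inr (by beta_reduce; omega), ?_, by beta_reduce; omega⟩
  intro j hj1 hj2
  rcases eq_or_ne (min (n + 1 + (j - 1 - ℓ)) q) (min (n + 1 + (j - ℓ)) q) with he | he
  · exact Or.inl he
  · refine Or.inr ⟨min (n + 1 + (j - 1 - ℓ)) q,
      ⟨by beta_reduce; omega, by beta_reduce; omega, by beta_reduce; omega, by beta_reduce; omega, by beta_reduce; omega⟩, Or.inl rfl, Or.inr (by beta_reduce; omega)⟩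

lemma nodeReaches_of_le {N n ℓ q : ℕ} (h : (n, ℓ) ∈ rectangularMesh N)
    (h1 : 1 ≤ q) (h2 : q ≤ n) (h3 : n + ℓ ≤ q + N) :
    nodeReaches (rectangularMesh N) N n ℓ q := by
  obtain ⟨hn1, hn2, hl1, hl2, hpar⟩ := h
  simp only at hn1 hn2 hl1 hl2 hpar
  refine ⟨fun j => max (n - (j - ℓ)) q, Or.inl (by beta_reduce; omega), ?_, by beta_reduce; omega⟩
  intro j hj1 hj2
  rcases eq_or_ne (max (n - (j - 1 - ℓ)) q) (max (n - (j - ℓ)) q) with he | he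
  · exact Or.inl he
  · refine Or.inr ⟨max (n - (j - ℓ)) q,
      ⟨by beta_reduce; omega, by beta_reduce; omega, by beta_reduce; omega, by beta_reduce; omega, by beta_reduce; omega⟩, Or.inr (by beta_reduce; omega), Or.inl rfl⟩

lemma inputs_eq (N n ℓ : ℕ) (h : (n, ℓ) ∈ rectangularMesh N) :
    reachableInputs (rectangularMesh N) N n ℓ
      = Set.Icc (max 1 (n + 1 - ℓ)) (min N (n + ℓ)) := by
  have h' := h
  obtain ⟨hn1, hn2, hl1, hl2, hpar⟩ := h'
  simp only at hn1 hn2 hl1 hl2 hpar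
  ext m
  simp only [reachableInputs, Set.mem_setOf_eq, Set.mem_Icc]
  constructor
  · rintro ⟨h1, h2, w, hw0, hws, hwe⟩
    have := walk_dist hws (ℓ - 1) (by beta_reduce; omega)
    omega
  · rintro ⟨h1, h2⟩
    refine ⟨by beta_reduce; omega, by beta_reduce; omega, ?_⟩
    by_cases hc : m ≤ n + 1
    · exact reaches_of_le h (by beta_reduce; omega) hc (by beta_reduce; omega)
    · exact reaches_of_ge h (by beta_reduce; omega) (by beta_reduce; omega) (by beta_reduce; omega)

lemma outputs_eq (N n ℓ : ℕ) (h : (n, ℓ) ∈ rectangularMesh N) :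
    reachableOutputs (rectangularMesh N) N N n ℓ
      = Set.Icc (max 1 (n + ℓ - N)) (min N (n + 1 + N - ℓ)) := by
  have h' := h
  obtain ⟨hn1, hn2, hl1, hl2, hpar⟩ := h'
  simp only at hn1 hn2 hl1 hl2 hpar
  ext q
  simp only [reachableOutputs, Set.mem_setOf_eq, Set.mem_Icc]
  constructor
  · rintro ⟨h1, h2, w, hw0, hws, hwe⟩
    have := walk_dist' hws N (by beta_reduce; omega) (by beta_reduce; omega)
    omega
  · rintro ⟨h1, h2⟩
    refine ⟨by beta_reduce; omega, by beta_reduce; omega, ?_⟩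
    by_cases hc : q ≤ n
    · exact nodeReaches_of_le h (by beta_reduce; omega) hc (by beta_reduce; omega)
    · exact nodeReaches_of_ge h (by beta_reduce; omega) (by beta_reduce; omega) (by beta_reduce; omega)

theorem rectangular_sensitivity_index (N n ℓ : ℕ) (hN : 2 ≤ N)
    (h : (n, ℓ) ∈ rectangularMesh N) :
    dDiag N (((n : ℤ) + ℓ) / 2) + 1 - sSeq N (((ℓ : ℤ) - n) / 2 + (N / 2 : ℕ))
      = ((reachableInputs (rectangularMesh N) N n ℓ).ncard : ℤ)
        + ((reachableOutputs (rectangularMesh N) N N n ℓ).ncard : ℤ) - N - 1 := by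
  have hI := inputs_eq N n ℓ h
  have hO := outputs_eq N n ℓ h
  obtain ⟨hn1, hn2, hl1, hl2, hpar⟩ := h
  simp only at hn1 hn2 hl1 hl2 hpar
  rw [hI, hO, ← Finset.coe_Icc, ← Finset.coe_Icc, Set.ncard_coe_finset,
    Set.ncard_coe_finset, Nat.card_Icc, Nat.card_Icc]
  unfold dDiag sSeq
  split_ifs with hx hy hy <;> push_cast <;> omega
end
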